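/- Let Z be a finite nonempty antichain of connected graphs under the minor relation, let k ≥ 1 and z, d ∈ ℕ, let G be a graph with a tree decomposition (T, β) of adhesion at most z, and let α : V(T) → 2^{V(G)} be such that for every node t, α(t) ⊆ β(t), |α(t)| ≤ d, and (β(t), α(t)) is a Z-local cover of G. Then either G contains k pairwise vertex-disjoint subgraphs, each containing some member of Z as a minor, or there exists a Z-local cover (X, A) of G such that G − X contains no member of Z as a minor, |A| ≤ (k − 1)·(z + d), and every connected component C of G − X satisfies |N_G(V(C))| ≤ z. (The combinatorial content of Lemma 5.6 of the paper, stated for antichains of connected graphs, for which the non-planar parts npl(Z) in the paper's definition of Z-local cover are replaced by the members of Z themselves.) -/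

import Mathlib

open SimpleGraph

/-- `H` is a minor of `G`: there is a family of pairwise disjoint nonempty subsets of `V(G)`,
one for each vertex of `H`, each inducing a connected subgraph of `G`, such that every edge
of `H` is realized by an edge of `G` between the corresponding branch sets. -/
def IsMinorOf {V : Type*} {W : Type*} (H : SimpleGraph V) (G : SimpleGraph W) : Prop :=
  ∃ X : V → Set W,
    (∀ a, (X a).Nonempty) ∧
    (∀ a b, a ≠ b → Disjoint (X a) (X b)) ∧
    (∀ a, (G.induce (X a)).Connected) ∧
    ∀ a b, H.Adj a b → ∃ x ∈ X a, ∃ y ∈ X b, G.Adj x y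

/-- The graph obtained from `M` by dissolving (suppressing) all vertices outside `T`:
two vertices of `T` are adjacent iff they are joined in `M` by a walk of positive length all
of whose internal vertices lie outside `T`. -/
def dissolve {W : Type*} (M : SimpleGraph W) (T : Set W) : SimpleGraph T :=
  SimpleGraph.fromRel fun a b =>
    ∃ p : M.Walk (a : W) (b : W),
      ∀ v ∈ p.support, v ≠ (a : W) → v ≠ (b : W) → v ∉ T

/-- `(M, T)` is an `H`-expansion (here `M` is a subgraph of an ambient graph `G`):
`T ⊆ V(M)`, every vertex of `V(M) ∖ T` has degree `2` in `M`, and the graph obtained from `M`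
by dissolving all vertices not in `T` contains `H` as a minor. -/
def IsExpansion {V : Type*} {W : Type*} (H : SimpleGraph V) {G : SimpleGraph W}
    (M : G.Subgraph) (T : Set W) : Prop :=
  T ⊆ M.verts ∧
  (∀ v ∈ M.verts, v ∉ T → (M.neighborSet v).ncard = 2) ∧
  IsMinorOf H (dissolve M.coe {v : M.verts | (v : W) ∈ T})

/-- `M` is an `H`-inflated copy in `G`: `(M, T)` is a minimal `H`-expansion for some `T`. -/
def IsInflatedCopy {V : Type*} {W : Type*} (H : SimpleGraph V) {G : SimpleGraph W}
    (M : G.Subgraph) : Prop :=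
  ∃ T : Set W, IsExpansion H M T ∧
    ∀ M' : G.Subgraph, M' ≤ M → IsExpansion H M' T → M' = M

/-- A tree decomposition of `G` with tree-node type `τ`: a tree on `τ` together with bags
covering all vertices and edges of `G`, such that for every vertex `v` of `G` the nodes whose
bag contains `v` induce a connected subgraph (a subtree) of the tree. -/
structure TreeDecomp {W : Type*} (G : SimpleGraph W) (τ : Type*) where
  tree : SimpleGraph τ
  isTree : tree.IsTree
  bag : τ → Set W
  bag_vert : ∀ v : W, ∃ t, v ∈ bag t
  bag_edge : ∀ ⦃v w : W⦄, G.Adj v w → ∃ t, v ∈ bag t ∧ w ∈ bag t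
  bag_conn : ∀ v : W, (tree.induce {t | v ∈ bag t}).Connected

/-- `(X, A)` is a `Z`-local cover of `G` for a family `Z` of graphs: `A ⊆ X ⊆ V(G)` and, for
every member `Z i` of the family, every `(Z i)`-inflated copy `M` in `G` meeting `X` also
meets `A`. -/
def IsLocalCoverFam {ι : Type*} {Vf : ι → Type*} (Z : ∀ i, SimpleGraph (Vf i))
    {W : Type*} (G : SimpleGraph W) (X A : Set W) : Prop :=
  A ⊆ X ∧
  ∀ (i : ι) (M : G.Subgraph), IsInflatedCopy (Z i) M →
    (M.verts ∩ X).Nonempty → (M.verts ∩ A).Nonempty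


section WalkHelpers
variable {W : Type*} {G : SimpleGraph W}

/-- There is a walk from `x` to `y` in `G` all of whose vertices lie in `U`. -/
def WalkIn (G : SimpleGraph W) (U : Set W) (x y : W) : Prop :=
  ∃ p : G.Walk x y, ∀ v ∈ p.support, v ∈ U

namespace WalkIn

lemma refl {U : Set W} {x : W} (hx : x ∈ U) : WalkIn G U x x :=
  ⟨.nil, by simpa using hx⟩

lemma symm {U : Set W} {x y : W} : WalkIn G U x y → WalkIn G U y x := by
  rintro ⟨p, hp⟩
  exact ⟨p.reverse, by simpa using hp⟩

lemma trans {U : Set W} {x y z : W} : WalkIn G U x y → WalkIn G U y z → WalkIn G U x z := by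
  rintro ⟨p, hp⟩ ⟨q, hq⟩
  refine ⟨p.append q, ?_⟩
  intro v hv
  rw [SimpleGraph.Walk.mem_support_append_iff] at hv
  exact hv.elim (hp v) (hq v)

lemma mono {U U' : Set W} (h : U ⊆ U') {x y : W} : WalkIn G U x y → WalkIn G U' x y := by
  rintro ⟨p, hp⟩; exact ⟨p, fun v hv => h (hp v hv)⟩

lemma of_adj {U : Set W} {x y : W} (h : G.Adj x y) (hx : x ∈ U) (hy : y ∈ U) :
    WalkIn G U x y :=
  ⟨.cons h .nil, by
    intro v hv
    simp only [Walk.support_cons, Walk.support_nil, List.mem_cons, List.mem_singleton] at hv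
    rcases hv with rfl | rfl | h
    exacts [hx, hy, absurd h List.not_mem_nil]⟩

lemma mem_left {U : Set W} {x y : W} (h : WalkIn G U x y) : x ∈ U := by
  obtain ⟨p, hp⟩ := h; exact hp x p.start_mem_support

lemma mem_right {U : Set W} {x y : W} (h : WalkIn G U x y) : y ∈ U := by
  obtain ⟨p, hp⟩ := h; exact hp y p.end_mem_support

end WalkIn

/-- Hom from an induced subgraph to the ambient graph. -/
def induceVal (G : SimpleGraph W) (S : Set W) : G.induce S →g G :=
  ⟨Subtype.val, fun h => h⟩

lemma reachable_induce_of_walk {U : Set W} {x y : W} (p : G.Walk x y)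
    (hp : ∀ v ∈ p.support, v ∈ U) :
    ∀ (hx : x ∈ U) (hy : y ∈ U), (G.induce U).Reachable ⟨x, hx⟩ ⟨y, hy⟩ := by
  induction p with
  | nil => intro hx hy; exact Reachable.refl _
  | @cons a b c h q ih =>
    intro hx hy
    have hb : b ∈ U := hp b (by simp)
    have hadj : (G.induce U).Adj ⟨a, hx⟩ ⟨b, hb⟩ := h
    exact hadj.reachable.trans (ih (fun v hv => hp v (by simp [hv])) hb hy)

lemma walkIn_of_reachable_induce {U : Set W} {a b : ↥U} (h : (G.induce U).Reachable a b) :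
    WalkIn G U ↑a ↑b := by
  obtain ⟨p⟩ := h
  refine ⟨p.map (induceVal G U), ?_⟩
  intro v hv
  replace hv : v ∈ (p.map (induceVal G U)).support := hv; rw [Walk.support_map] at hv
  obtain ⟨u, _, rfl⟩ := List.mem_map.1 hv
  exact u.2

lemma connected_induce_of_walkIn {U : Set W} (hU : U.Nonempty)
    (h : ∀ x ∈ U, ∀ y ∈ U, WalkIn G U x y) : (G.induce U).Connected := by
  rw [connected_iff]
  refine ⟨?_, hU.to_subtype⟩
  rintro ⟨x, hx⟩ ⟨y, hy⟩
  obtain ⟨p, hp⟩ := h x hx y hy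
  exact reachable_induce_of_walk p hp hx hy

lemma walkIn_of_connected_induce {U : Set W} (h : (G.induce U).Connected)
    {x y : W} (hx : x ∈ U) (hy : y ∈ U) : WalkIn G U x y :=
  walkIn_of_reachable_induce (h.preconnected ⟨x, hx⟩ ⟨y, hy⟩)

lemma walkIn_induce {S U : Set W} (hUS : U ⊆ S) {x y : W} (p : G.Walk x y)
    (hp : ∀ v ∈ p.support, v ∈ U) :
    ∀ (hx : x ∈ S) (hy : y ∈ S),
      WalkIn (G.induce S) (Subtype.val ⁻¹' U) ⟨x, hx⟩ ⟨y, hy⟩ := by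
  induction p with
  | nil =>
    intro hx hy
    exact WalkIn.refl (by simpa using hp _ (by simp))
  | @cons a b c h q ih =>
    intro hx hy
    have hbU : b ∈ U := hp b (by simp)
    have hadj : (G.induce S).Adj ⟨a, hx⟩ ⟨b, hUS hbU⟩ := h
    exact (WalkIn.of_adj hadj (by simpa using hp a (by simp)) (by simpa using hbU)).trans
      (ih (fun v hv => hp v (by simp [hv])) (hUS hbU) hy)

lemma walkIn_of_induce {S : Set W} {A : Set ↥S} {a b : ↥S}
    (h : WalkIn (G.induce S) A a b) : WalkIn G (Subtype.val '' A) ↑a ↑b := by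
  obtain ⟨p, hp⟩ := h
  refine ⟨p.map (induceVal G S), ?_⟩
  intro v hv
  replace hv : v ∈ (p.map (induceVal G S)).support := hv; rw [Walk.support_map] at hv
  obtain ⟨u, hu, rfl⟩ := List.mem_map.1 hv
  exact ⟨u, hp u hu, rfl⟩

/-- Gluing walks along a connected pattern. -/
lemma glue_walkIn {J : Type*} {P : SimpleGraph J} {C : J → Set W} {U : Set W}
    (hpiece : ∀ j, ∀ x ∈ C j, ∀ y ∈ C j, WalkIn G U x y)
    (hedge : ∀ j j', P.Adj j j' → ∃ x ∈ C j, ∃ y ∈ C j', WalkIn G U x y)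
    {j j' : J} (q : P.Walk j j') :
    ∀ x ∈ C j, ∀ y ∈ C j', WalkIn G U x y := by
  induction q with
  | nil => exact hpiece _
  | @cons a b c hadj q ih =>
    intro x hx y hy
    obtain ⟨x1, hx1, y1, hy1, hw⟩ := hedge a b hadj
    exact ((hpiece a x hx x1 hx1).trans hw).trans (ih y1 hy1 y hy)

end WalkHelpers

section MinorHelpers
variable {V W W₂ : Type*} {H : SimpleGraph V} {G : SimpleGraph W} {G₂ : SimpleGraph W₂}

lemma IsMinorOf.of_injective_hom (f : G →g G₂) (hf : Function.Injective f)
    (h : IsMinorOf H G) : IsMinorOf H G₂ := by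
  obtain ⟨X, hne, hdisj, hconn, hedge⟩ := h
  refine ⟨fun a => f '' X a, fun a => (hne a).image f,
    fun a b hab => (Set.disjoint_image_iff hf).2 (hdisj a b hab), ?_, ?_⟩
  · intro a
    refine Connected.map (⟨fun x => ⟨f x, ⟨x.1, x.2, rfl⟩⟩, fun {u v} h => f.map_adj h⟩ :
      G.induce (X a) →g G₂.induce (f '' X a)) ?_ (hconn a)
    rintro ⟨_, ⟨x, hx, rfl⟩⟩
    exact ⟨⟨x, hx⟩, rfl⟩
  · intro a b hab
    obtain ⟨x, hx, y, hy, hxy⟩ := hedge a b hab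
    exact ⟨f x, ⟨x, hx, rfl⟩, f y, ⟨y, hy, rfl⟩, f.map_adj hxy⟩

/-- A `W`-level description of having an `H`-minor inside the vertex set `S`. -/
def MinorVia {V W : Type*} (H : SimpleGraph V) (G : SimpleGraph W) (S : Set W) : Prop :=
  ∃ X : V → Set W,
    (∀ a, X a ⊆ S) ∧ (∀ a, (X a).Nonempty) ∧
    (∀ a b, a ≠ b → Disjoint (X a) (X b)) ∧
    (∀ a, ∀ x ∈ X a, ∀ y ∈ X a, WalkIn G (X a) x y) ∧
    ∀ a b, H.Adj a b → ∃ x ∈ X a, ∃ y ∈ X b, G.Adj x y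

lemma minorVia_iff {S : Set W} : MinorVia H G S ↔ IsMinorOf H (G.induce S) := by
  constructor
  · rintro ⟨X, hXS, hne, hdisj, hwalk, hedge⟩
    refine ⟨fun a => Subtype.val ⁻¹' X a, ?_, ?_, ?_, ?_⟩
    · intro a; obtain ⟨x, hx⟩ := hne a; exact ⟨⟨x, hXS a hx⟩, hx⟩
    · intro a b hab; exact (hdisj a b hab).preimage _
    · intro a
      apply connected_induce_of_walkIn
      · obtain ⟨x, hx⟩ := hne a; exact ⟨⟨x, hXS a hx⟩, hx⟩
      · rintro ⟨x, hxS⟩ hx ⟨y, hyS⟩ hy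
        obtain ⟨p, hp⟩ := hwalk a x hx y hy
        exact walkIn_induce (hXS a) p hp hxS hyS
    · intro a b hab
      obtain ⟨x, hx, y, hy, hxy⟩ := hedge a b hab
      exact ⟨⟨x, hXS a hx⟩, hx, ⟨y, hXS b hy⟩, hy, hxy⟩
  · rintro ⟨X, hne, hdisj, hconn, hedge⟩
    refine ⟨fun a => Subtype.val '' X a, ?_, fun a => (hne a).image _,
      fun a b hab => (Set.disjoint_image_iff Subtype.val_injective).2 (hdisj a b hab), ?_, ?_⟩
    · rintro a _ ⟨x, hx, rfl⟩; exact x.2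
    · rintro a _ ⟨x, hx, rfl⟩ _ ⟨y, hy, rfl⟩
      exact walkIn_of_induce (walkIn_of_connected_induce (hconn a) hx hy)
    · intro a b hab
      obtain ⟨x, hx, y, hy, hxy⟩ := hedge a b hab
      exact ⟨x, ⟨x, hx, rfl⟩, y, ⟨y, hy, rfl⟩, hxy⟩

lemma MinorVia.mono {S S' : Set W} (h : MinorVia H G S) (hss : S ⊆ S') : MinorVia H G S' := by
  obtain ⟨X, hXS, h2, h3, h4, h5⟩ := h
  exact ⟨X, fun a => (hXS a).trans hss, h2, h3, h4, h5⟩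

lemma MinorVia.nonempty [Nonempty V] {S : Set W} (h : MinorVia H G S) : S.Nonempty := by
  obtain ⟨X, hXS, hne, -⟩ := h
  obtain ⟨x, hx⟩ := hne (Classical.arbitrary V)
  exact ⟨x, hXS _ hx⟩

lemma MinorVia.exists_connected {S : Set W} (hH : H.Connected) (h : MinorVia H G S) :
    ∃ S₀ ⊆ S, S₀.Nonempty ∧ (∀ x ∈ S₀, ∀ y ∈ S₀, WalkIn G S₀ x y) ∧ MinorVia H G S₀ := by
  obtain ⟨X, hXS, hne, hdisj, hwalk, hedge⟩ := h
  have := hH.nonempty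
  refine ⟨⋃ a, X a, Set.iUnion_subset hXS, ?_, ?_,
    X, fun a => Set.subset_iUnion X a, hne, hdisj, hwalk, hedge⟩
  · obtain ⟨x, hx⟩ := hne (Classical.arbitrary V)
    exact ⟨x, Set.mem_iUnion.2 ⟨_, hx⟩⟩
  · intro x hx y hy
    obtain ⟨a, hxa⟩ := Set.mem_iUnion.1 hx
    obtain ⟨b, hyb⟩ := Set.mem_iUnion.1 hy
    obtain ⟨q⟩ := hH.preconnected a b
    refine glue_walkIn (P := H) (C := X) ?_ ?_ q x hxa y hyb
    · intro j u hu v hv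
      exact (hwalk j u hu v hv).mono (Set.subset_iUnion X j)
    · intro j j' hadj
      obtain ⟨u, hu, v, hv, huv⟩ := hedge j j' hadj
      exact ⟨u, hu, v, hv, WalkIn.of_adj huv (Set.mem_iUnion.2 ⟨_, hu⟩)
        (Set.mem_iUnion.2 ⟨_, hv⟩)⟩

end MinorHelpers

section PathSplit
variable {W : Type*} {G : SimpleGraph W} [DecidableEq W]

lemma disjoint_take_drop_tail {u v x : W} {p : G.Walk u v} (hp : p.IsPath)
    (hx : x ∈ p.support) :
    List.Disjoint (p.takeUntil x hx).support (p.dropUntil x hx).support.tail := by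
  have hs := p.take_spec hx
  have hnodup := hp.support_nodup
  rw [← hs, Walk.support_append, List.nodup_append] at hnodup
  intro a ha hb; exact hnodup.2.2 a ha a hb rfl

lemma start_not_mem_dropUntil_support {u v x : W} {p : G.Walk u v} (hp : p.IsPath)
    (hx : x ∈ p.support) (hxu : x ≠ u) : u ∉ (p.dropUntil x hx).support := by
  intro hu
  rw [Walk.support_eq_cons, List.mem_cons] at hu
  rcases hu with hu | hu
  · exact hxu hu.symm
  · exact disjoint_take_drop_tail hp hx (Walk.start_mem_support _) hu

lemma end_not_mem_takeUntil_support {u v x : W} {p : G.Walk u v} (hp : p.IsPath)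
    (hx : x ∈ p.support) (hxv : x ≠ v) : v ∉ (p.takeUntil x hx).support := by
  intro hv
  have hvd : v ∈ (p.dropUntil x hx).support := Walk.end_mem_support _
  rw [Walk.support_eq_cons, List.mem_cons] at hvd
  rcases hvd with hvd | hvd
  · exact hxv hvd.symm
  · exact disjoint_take_drop_tail hp hx hv hvd

lemma mem_support_of_getVert {u v : W} {p : G.Walk u v} {n : ℕ} (hn : n ≤ p.length) :
    p.getVert n ∈ p.support :=
  Walk.mem_support_iff_exists_getVert.2 ⟨n, rfl, hn⟩

lemma snd_mem_support {u v : W} (p : G.Walk u v) (hp : ¬ p.Nil) :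
    p.getVert 1 ∈ p.support :=
  mem_support_of_getVert (by rwa [Nat.one_le_iff_ne_zero, ← Nat.pos_iff_ne_zero,
    ← Walk.not_nil_iff_lt_length])

lemma isPath_concat {u v w : W} {p : G.Walk u v} (hp : p.IsPath) (h : G.Adj v w)
    (hw : w ∉ p.support) : (p.concat h).IsPath := by
  apply Walk.IsPath.mk'
  rw [Walk.support_concat, List.nodup_append]
  refine ⟨hp.support_nodup, List.nodup_singleton w, ?_⟩
  intro a ha b hb
  rw [List.mem_singleton] at hb
  subst hb; exact fun e => hw (e ▸ ha)

end PathSplit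

section Lifting
variable {Ω V : Type*} {H : SimpleGraph V} {Γ : SimpleGraph Ω} {T : Set Ω}

lemma dissolve_adj_exists_path [DecidableEq Ω] {a b : ↥T} (h : (dissolve Γ T).Adj a b) :
    ∃ p : Γ.Walk ↑a ↑b, p.IsPath ∧ ∀ v ∈ p.support, v ≠ ↑a → v ≠ ↑b → v ∉ T := by
  rw [dissolve, fromRel_adj] at h
  obtain ⟨hne, h | h⟩ := h
  · obtain ⟨q, hq⟩ := h
    exact ⟨q.toPath, q.toPath.2, fun v hv => hq v (Walk.support_toPath_subset q hv)⟩
  · obtain ⟨q, hq⟩ := h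
    refine ⟨q.reverse.toPath, q.reverse.toPath.2, fun v hv hva hvb => ?_⟩
    have hv' : v ∈ q.support := by
      have := Walk.support_toPath_subset q.reverse hv
      rwa [Walk.support_reverse, List.mem_reverse] at this
    exact hq v hv' hvb hva

lemma dissolve_adj_of_adj {a b : ↥T} (h : Γ.Adj ↑a ↑b) : (dissolve Γ T).Adj a b := by
  rw [dissolve, fromRel_adj]
  refine ⟨fun hab => h.ne (congrArg Subtype.val hab), Or.inl ⟨.cons h .nil, ?_⟩⟩
  intro v hv hva hvb
  simp only [Walk.support_cons, Walk.support_nil, List.mem_cons, List.mem_singleton] at hv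
  rcases hv with rfl | rfl | hv
  · exact absurd rfl hva
  · exact absurd rfl hvb
  · exact absurd hv List.not_mem_nil

lemma isMinorOf_of_dissolve [Finite Ω]
    (hdeg : ∀ v, v ∉ T → (Γ.neighborSet v).ncard = 2)
    (h : IsMinorOf H (dissolve Γ T)) : IsMinorOf H Γ := by
  classical
  obtain ⟨X, hne, hdisj, hconn, hedge⟩ := h
  letI : Fintype Ω := Fintype.ofFinite Ω
  letI : LinearOrder Ω := LinearOrder.lift' (fun x => ((Fintype.equivFin Ω) x : ℕ))
    (fun a b hab => (Fintype.equivFin Ω).injective (Fin.val_injective hab))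
  set D := dissolve Γ T with hD
  have hpath : ∀ (a b : ↥T), D.Adj a b →
      ∃ p : Γ.Walk ↑a ↑b, p.IsPath ∧ ∀ v ∈ p.support, v ≠ ↑a → v ≠ ↑b → v ∉ T :=
    fun a b h => dissolve_adj_exists_path h
  choose pth hpathP hpathT using hpath
  set I : ∀ (a b : ↥T), D.Adj a b → Set Ω :=
    (fun a b h => {v | v ∈ (pth a b h).support ∧ v ≠ ↑a ∧ v ≠ ↑b}) with hIdef
  have hIT : ∀ a b h, ∀ v ∈ I a b h, v ∉ T :=
    fun a b h v hv => hpathT a b h v hv.1 hv.2.1 hv.2.2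
  have hsupT : ∀ a b (h : D.Adj a b), ∀ v ∈ (pth a b h).support, v ∈ T → v = ↑a ∨ v = ↑b := by
    intro a b h v hv hvT
    by_contra hcon
    push_neg at hcon
    exact hpathT a b h v hv hcon.1 hcon.2 hvT
  -- every neighbour of an interior vertex lies on the path
  have hNBR : ∀ a b (h : D.Adj a b), ∀ x, x ∈ I a b h → ∀ y, Γ.Adj x y →
      y ∈ (pth a b h).support := by
    intro a b h x hx y hy
    have hxs : x ∈ (pth a b h).support := hx.1
    have hxT : x ∉ T := hIT a b h x hx
    have hnt1 : ¬ ((pth a b h).takeUntil x hxs).reverse.Nil :=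
      Walk.not_nil_of_ne (fun e => hx.2.1 e)
    have hnt2 : ¬ ((pth a b h).dropUntil x hxs).Nil :=
      Walk.not_nil_of_ne (fun e => hx.2.2 e)
    set prv := ((pth a b h).takeUntil x hxs).reverse.getVert 1 with hprv
    set nxt := ((pth a b h).dropUntil x hxs).getVert 1 with hnxt
    have haprv : Γ.Adj x prv := Walk.adj_snd hnt1
    have hanxt : Γ.Adj x nxt := Walk.adj_snd hnt2
    have hprvmem : prv ∈ ((pth a b h).takeUntil x hxs).support := by
      have := snd_mem_support _ hnt1
      rwa [Walk.support_reverse, List.mem_reverse] at this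
    have hnxtmem : nxt ∈ ((pth a b h).dropUntil x hxs).support := snd_mem_support _ hnt2
    have hprvnxt : prv ≠ nxt := by
      intro e
      have hnxttail : nxt ∈ ((pth a b h).dropUntil x hxs).support.tail := by
        have := hnxtmem
        rw [Walk.support_eq_cons, List.mem_cons] at this
        rcases this with h' | h'
        · exact absurd h'.symm hanxt.ne
        · exact h'
      exact disjoint_take_drop_tail (hpathP a b h) hxs (e ▸ hprvmem) hnxttail
    have hpair : ({prv, nxt} : Set Ω) = Γ.neighborSet x := by
      apply Set.eq_of_subset_of_ncard_le
      · rintro y' (rfl | rfl)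
        · exact haprv
        · exact hanxt
      · rw [hdeg x hxT, Set.ncard_pair hprvnxt]
      · exact Set.toFinite _
    have hymem : y ∈ ({prv, nxt} : Set Ω) := by rw [hpair]; exact hy
    rcases hymem with rfl | rfl
    · exact Walk.support_takeUntil_subset _ hxs hprvmem
    · exact Walk.support_dropUntil_subset _ hxs hnxtmem
  -- walks leaving an interior vertex that stay outside T remain on the path
  have hW1 : ∀ a b (h : D.Adj a b), ∀ (x d : Ω) (q : Γ.Walk x d), x ∈ I a b h →
      (∀ v ∈ q.support, v ∉ T ∨ v = d) → d ∈ (pth a b h).support := by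
    intro a b h x d q
    induction q with
    | nil => exact fun hx _ => hx.1
    | @cons u y w hadj q ih =>
      intro hx hq
      have hys : y ∈ (pth a b h).support := hNBR a b h u hx y hadj
      by_cases hyT : y ∈ T
      · rcases hq y (by simp) with hyT' | hyd
        · exact absurd hyT hyT'
        · exact hyd ▸ hys
      · refine ih ⟨hys, ?_, ?_⟩ (fun v hv => hq v (by simp [hv]))
        · exact fun e => hyT (e ▸ a.2)
        · exact fun e => hyT (e ▸ b.2)
  -- interiors of distinct pairs are disjoint
  have hII : ∀ a b (h : D.Adj a b) c d (h' : D.Adj c d), (I a b h ∩ I c d h').Nonempty →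
      ({(↑a : Ω), ↑b} : Set Ω) = {↑c, ↑d} := by
    rintro a b h c d h' ⟨x, hxab, hxcd⟩
    have hp' := hpathP c d h'
    have hxs : x ∈ (pth c d h').support := hxcd.1
    have hdmem : (↑d : Ω) ∈ (pth a b h).support := by
      refine hW1 a b h x ↑d ((pth c d h').dropUntil x hxs) hxab ?_
      intro v hv
      by_cases hvd : v = ↑d
      · exact Or.inr hvd
      · refine Or.inl ?_
        have hvs : v ∈ (pth c d h').support := Walk.support_dropUntil_subset _ hxs hv
        have hvc : v ≠ ↑c := by
          rintro rfl
          exact start_not_mem_dropUntil_support hp' hxs hxcd.2.1 hv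
        exact hpathT c d h' v hvs hvc hvd
    have hcmem : (↑c : Ω) ∈ (pth a b h).support := by
      refine hW1 a b h x ↑c ((pth c d h').takeUntil x hxs).reverse hxab ?_
      intro v hv
      rw [Walk.support_reverse, List.mem_reverse] at hv
      by_cases hvc : v = ↑c
      · exact Or.inr hvc
      · refine Or.inl ?_
        have hvs : v ∈ (pth c d h').support := Walk.support_takeUntil_subset _ hxs hv
        have hvd : v ≠ ↑d := by
          rintro rfl
          exact end_not_mem_takeUntil_support hp' hxs hxcd.2.2 hv
        exact hpathT c d h' v hvs hvc hvd
    have hda := hsupT a b h ↑d hdmem d.2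
    have hca := hsupT a b h ↑c hcmem c.2
    have hcd : (↑c : Ω) ≠ ↑d := fun e => h'.ne (Subtype.val_injective e)
    have hab : (↑a : Ω) ≠ ↑b := fun e => h.ne (Subtype.val_injective e)
    symm
    apply Set.eq_of_subset_of_ncard_le
    · rintro y (rfl | rfl)
      · rcases hca with h1 | h1 <;> simp [h1]
      · rcases hda with h1 | h1 <;> simp [h1]
    · rw [Set.ncard_pair hab, Set.ncard_pair hcd]
    · exact Set.toFinite _
  -- the pieces
  set piece : ↥T → Set Ω :=
    (fun a => {(↑a : Ω)} ∪ ⋃ (b : ↥T) (h : D.Adj a b) (_ : (↑a : Ω) < ↑b), I a b h)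
    with hpiecedef
  have hmem_piece : ∀ a, (↑a : Ω) ∈ piece a := fun a => Or.inl rfl
  have hI_sub_piece : ∀ a b (h : D.Adj a b), (↑a : Ω) < ↑b → I a b h ⊆ piece a := by
    intro a b h hlt v hv
    exact Or.inr (Set.mem_iUnion.2 ⟨b, Set.mem_iUnion.2 ⟨h, Set.mem_iUnion.2 ⟨hlt, hv⟩⟩⟩)
  have hpieceT : ∀ a, ∀ x ∈ piece a, x ∈ T → x = ↑a := by
    intro a x hx hxT
    rcases hx with hx | hx
    · exact hx
    · simp only [Set.mem_iUnion] at hx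
      obtain ⟨b, h, hlt, hxI⟩ := hx
      exact absurd hxT (hIT a b h x hxI)
  have hpiece_walk : ∀ a, ∀ x ∈ piece a, WalkIn Γ (piece a) ↑a x := by
    intro a x hx
    rcases hx with hx | hx
    · rw [Set.mem_singleton_iff] at hx
      subst hx
      exact WalkIn.refl (hmem_piece a)
    · simp only [Set.mem_iUnion] at hx
      obtain ⟨b, h, hlt, hxI⟩ := hx
      refine ⟨(pth a b h).takeUntil x hxI.1, ?_⟩
      intro v hv
      have hvs := Walk.support_takeUntil_subset _ hxI.1 hv
      by_cases hva : v = ↑a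
      · rw [hva]; exact hmem_piece a
      · have hvb : v ≠ ↑b := by
          rintro rfl
          exact end_not_mem_takeUntil_support (hpathP a b h) hxI.1 hxI.2.2 hv
        exact hI_sub_piece a b h hlt ⟨hvs, hva, hvb⟩
  have hpiece_inter : ∀ a c, (piece a ∩ piece c).Nonempty → a = c := by
    rintro a c ⟨x, hxa, hxc⟩
    rcases hxa with hxa | hxa <;> rcases hxc with hxc | hxc
    · rw [Set.mem_singleton_iff] at hxa hxc
      exact Subtype.val_injective (hxa ▸ hxc)
    · rw [Set.mem_singleton_iff] at hxa
      simp only [Set.mem_iUnion] at hxc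
      obtain ⟨d, h', hlt, hxI⟩ := hxc
      exact absurd (hxa ▸ a.2) (hIT c d h' x hxI)
    · rw [Set.mem_singleton_iff] at hxc
      simp only [Set.mem_iUnion] at hxa
      obtain ⟨b, h, hlt, hxI⟩ := hxa
      exact absurd (hxc ▸ c.2) (hIT a b h x hxI)
    · simp only [Set.mem_iUnion] at hxa hxc
      obtain ⟨b, h, hltab, hxI⟩ := hxa
      obtain ⟨d, h', hltcd, hxI'⟩ := hxc
      have hpairs := hII a b h c d h' ⟨x, hxI, hxI'⟩
      rcases Set.pair_eq_pair_iff.1 hpairs with ⟨h1, h2⟩ | ⟨h1, h2⟩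
      · exact Subtype.val_injective h1
      · exfalso
        rw [h1] at hltab
        rw [← h2] at hltcd
        exact absurd (hltab.trans hltcd) (lt_irrefl _)
  set Y : V → Set Ω := (fun u => ⋃ (a : ↥T) (_ : a ∈ X u), piece a) with hYdef
  have hpiece_sub_Y : ∀ u (a : ↥T), a ∈ X u → piece a ⊆ Y u := by
    intro u a ha v hv
    exact Set.mem_iUnion.2 ⟨a, Set.mem_iUnion.2 ⟨ha, hv⟩⟩
  refine ⟨Y, ?_, ?_, ?_, ?_⟩
  · intro u
    obtain ⟨a, ha⟩ := hne u
    exact ⟨↑a, hpiece_sub_Y u a ha (hmem_piece a)⟩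
  · intro u w huw
    rw [Set.disjoint_left]
    rintro x hxu hxw
    simp only [hYdef, Set.mem_iUnion] at hxu hxw
    obtain ⟨a, ha, hxa⟩ := hxu
    obtain ⟨c, hc, hxc⟩ := hxw
    have hac : a = c := hpiece_inter a c ⟨x, hxa, hxc⟩
    subst hac
    exact Set.disjoint_left.1 (hdisj u w huw) ha hc
  · intro u
    apply connected_induce_of_walkIn
    · obtain ⟨a, ha⟩ := hne u
      exact ⟨↑a, hpiece_sub_Y u a ha (hmem_piece a)⟩
    · intro x hx y hy
      simp only [hYdef, Set.mem_iUnion] at hx hy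
      obtain ⟨a, ha, hxa⟩ := hx
      obtain ⟨c, hc, hyc⟩ := hy
      obtain ⟨q⟩ := (hconn u).preconnected ⟨a, ha⟩ ⟨c, hc⟩
      refine glue_walkIn (P := D.induce (X u)) (C := fun j => piece ↑j) (U := Y u)
        ?_ ?_ q x hxa y hyc
      · intro j x' hx' y' hy'
        exact ((hpiece_walk ↑j x' hx').symm.trans (hpiece_walk ↑j y' hy')).mono
          (hpiece_sub_Y u ↑j j.2)
      · intro j j' hadj
        have hD' : D.Adj ↑j ↑j' := hadj
        refine ⟨↑↑j, hmem_piece ↑j, ↑↑j', hmem_piece ↑j', ?_⟩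
        rcases lt_trichotomy (↑↑j : Ω) ↑↑j' with hlt | heq | hlt
        · refine ⟨pth ↑j ↑j' hD', ?_⟩
          intro v hv
          by_cases hva : v = ↑↑j
          · exact hva ▸ hpiece_sub_Y u ↑j j.2 (hmem_piece ↑j)
          · by_cases hvb : v = ↑↑j'
            · exact hvb ▸ hpiece_sub_Y u ↑j' j'.2 (hmem_piece ↑j')
            · exact hpiece_sub_Y u ↑j j.2 (hI_sub_piece _ _ hD' hlt ⟨hv, hva, hvb⟩)
        · exact absurd (Subtype.val_injective heq) hD'.ne
        · refine WalkIn.symm ⟨pth ↑j' ↑j hD'.symm, ?_⟩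
          intro v hv
          by_cases hva : v = ↑↑j'
          · exact hva ▸ hpiece_sub_Y u ↑j' j'.2 (hmem_piece ↑j')
          · by_cases hvb : v = ↑↑j
            · exact hvb ▸ hpiece_sub_Y u ↑j j.2 (hmem_piece ↑j)
            · exact hpiece_sub_Y u ↑j' j'.2 (hI_sub_piece _ _ hD'.symm hlt ⟨hv, hva, hvb⟩)
  · intro u w hadj
    obtain ⟨a, ha, b, hb, hab⟩ := hedge u w hadj
    by_cases hdir : Γ.Adj ↑a ↑b
    · exact ⟨↑a, hpiece_sub_Y u a ha (hmem_piece a), ↑b, hpiece_sub_Y w b hb (hmem_piece b), hdir⟩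
    · rcases lt_trichotomy (↑a : Ω) ↑b with hlt | heq | hlt
      · have hnn : ¬ (pth a b hab).reverse.Nil :=
          Walk.not_nil_of_ne (fun e => hab.ne (Subtype.val_injective e.symm))
        set pen := (pth a b hab).reverse.getVert 1 with hpen
        have hadjpen : Γ.Adj ↑b pen := Walk.adj_snd hnn
        have hpens : pen ∈ (pth a b hab).support := by
          have := snd_mem_support _ hnn
          rwa [Walk.support_reverse, List.mem_reverse] at this
        have hpenb : pen ≠ ↑b := hadjpen.ne'
        have hpena : pen ≠ ↑a := fun hpe => hdir (hpe ▸ hadjpen).symm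
        exact ⟨pen, hpiece_sub_Y u a ha (hI_sub_piece a b hab hlt ⟨hpens, hpena, hpenb⟩),
          ↑b, hpiece_sub_Y w b hb (hmem_piece b), hadjpen.symm⟩
      · exact absurd (Subtype.val_injective heq) hab.ne
      · have hnn : ¬ (pth b a hab.symm).reverse.Nil :=
          Walk.not_nil_of_ne (fun e => hab.ne (Subtype.val_injective e))
        set pen := (pth b a hab.symm).reverse.getVert 1 with hpen
        have hadjpen : Γ.Adj ↑a pen := Walk.adj_snd hnn
        have hpens : pen ∈ (pth b a hab.symm).support := by
          have := snd_mem_support _ hnn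
          rwa [Walk.support_reverse, List.mem_reverse] at this
        have hpena : pen ≠ ↑a := hadjpen.ne'
        have hpenb : pen ≠ ↑b := fun hpe => hdir (hpe ▸ hadjpen)
        exact ⟨↑a, hpiece_sub_Y u a ha (hmem_piece a),
          pen, hpiece_sub_Y w b hb (hI_sub_piece b a hab.symm hlt ⟨hpens, hpenb, hpena⟩),
          hadjpen⟩

end Lifting

section Copies
variable {V W : Type*} {H : SimpleGraph V} {G : SimpleGraph W}

instance instFiniteSubgraph [Finite W] : Finite G.Subgraph :=
  Finite.of_injective (fun M => (M.verts, M.Adj))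
    (fun M N h => Subgraph.ext (congrArg Prod.fst h) (congrArg Prod.snd h))

lemma coe_neighborSet_ncard (M : G.Subgraph) (v : ↥M.verts) :
    (M.coe.neighborSet v).ncard = (M.neighborSet ↑v).ncard := by
  have h : M.neighborSet ↑v = Subtype.val '' (M.coe.neighborSet v) := by
    ext w
    constructor
    · intro hw
      exact ⟨⟨w, hw.snd_mem⟩, hw, rfl⟩
    · rintro ⟨x, hx, rfl⟩; exact hx
  rw [h, Set.ncard_image_of_injective _ Subtype.val_injective]

lemma minorVia_of_isExpansion [Finite W] {M : G.Subgraph} {T : Set W}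
    (hexp : IsExpansion H M T) : MinorVia H G M.verts := by
  obtain ⟨hsub, hdeg, hminor⟩ := hexp
  have h1 : IsMinorOf H M.coe := by
    refine isMinorOf_of_dissolve (T := {v : M.verts | (v : W) ∈ T}) ?_ hminor
    intro v hv
    rw [coe_neighborSet_ncard]
    exact hdeg ↑v v.2 hv
  have h2 : IsMinorOf H (G.induce M.verts) :=
    h1.of_injective_hom ⟨fun x => x, fun {x y} h => M.adj_sub h⟩ (fun x y h => h)
  exact minorVia_iff.2 h2

lemma exists_inflatedCopy [Finite W] {S : Set W} (hmv : MinorVia H G S) :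
    ∃ M : G.Subgraph, IsInflatedCopy H M ∧ M.verts = S := by
  classical
  let K : G.Subgraph :=
    { verts := S
      Adj := fun v w => v ∈ S ∧ w ∈ S ∧ G.Adj v w
      adj_sub := fun h => h.2.2
      edge_vert := fun h => h.1
      symm := ⟨fun v w h => ⟨h.2.1, h.1, h.2.2.symm⟩⟩ }
  have hKexp : IsExpansion H K S := by
    refine ⟨fun v hv => hv, fun v hv hvnot => absurd hv hvnot, ?_⟩
    have hm : IsMinorOf H (G.induce S) := minorVia_iff.1 hmv
    refine hm.of_injective_hom
      (⟨fun x => ⟨⟨↑x, x.2⟩, x.2⟩, ?_⟩ :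
        G.induce S →g dissolve K.coe {v : K.verts | (v : W) ∈ S}) ?_
    · intro x y hxy
      exact dissolve_adj_of_adj (show K.coe.Adj ⟨↑x, x.2⟩ ⟨↑y, y.2⟩ from ⟨x.2, y.2, hxy⟩)
    · intro x y h
      exact Subtype.ext (congrArg Subtype.val (congrArg Subtype.val h))
  obtain ⟨Mmin, hMmin, hmin⟩ := (Finite.to_wellFoundedLT (α := G.Subgraph)).wf.has_min
    {M' | M' ≤ K ∧ IsExpansion H M' S} ⟨K, le_refl K, hKexp⟩
  refine ⟨Mmin, ⟨S, hMmin.2, ?_⟩, ?_⟩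
  · intro M' hle hexp'
    by_contra hne'
    exact hmin M' ⟨hle.trans hMmin.1, hexp'⟩ (lt_of_le_of_ne hle hne')
  · exact Set.Subset.antisymm (Subgraph.verts_mono hMmin.1) hMmin.2.1

end Copies

section Tree
variable {σ : Type*} {Tr : SimpleGraph σ}

noncomputable def tpath (hT : Tr.IsTree) (s t : σ) : Tr.Walk s t :=
  (hT.existsUnique_path s t).choose

lemma tpath_isPath (hT : Tr.IsTree) (s t : σ) : (tpath hT s t).IsPath :=
  (hT.existsUnique_path s t).choose_spec.1

lemma tpath_unique (hT : Tr.IsTree) {s t : σ} (p : Tr.Walk s t) (hp : p.IsPath) :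
    p = tpath hT s t :=
  (hT.existsUnique_path s t).choose_spec.2 p hp

/-- The neighbour of `t` in the direction of `s` (junk if `s = t`). -/
noncomputable def nxt (hT : Tr.IsTree) (t s : σ) : σ := (tpath hT t s).getVert 1

lemma nxt_adj (hT : Tr.IsTree) {t s : σ} (h : t ≠ s) : Tr.Adj t (nxt hT t s) :=
  Walk.adj_snd (Walk.not_nil_of_ne h)

lemma nxt_eq_of_cons_path (hT : Tr.IsTree) {t u s : σ} (h : Tr.Adj t u) (q : Tr.Walk u s)
    (hpath : (Walk.cons h q).IsPath) : nxt hT t s = u := by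
  have := tpath_unique hT _ hpath
  rw [nxt, ← this]; exact Walk.snd_cons q h

lemma nxt_of_adj (hT : Tr.IsTree) {t u : σ} (h : Tr.Adj t u) : nxt hT t u = u :=
  nxt_eq_of_cons_path hT h .nil (by simp [Walk.cons_isPath_iff, h.ne])

lemma nxt_decomp (hT : Tr.IsTree) [DecidableEq σ] {t s : σ} (h : t ≠ s) :
    ∃ (h1 : Tr.Adj t (nxt hT t s)) (q : Tr.Walk (nxt hT t s) s),
      (Walk.cons h1 q).IsPath := by
  have hnn : ¬ (tpath hT t s).Nil := Walk.not_nil_of_ne h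
  have h1 : Tr.Adj t (nxt hT t s) := nxt_adj hT h
  have hmem : nxt hT t s ∈ (tpath hT t s).support := snd_mem_support _ hnn
  refine ⟨h1, (tpath hT t s).dropUntil _ hmem, ?_⟩
  rw [Walk.cons_isPath_iff]
  exact ⟨(tpath_isPath hT t s).dropUntil hmem,
    start_not_mem_dropUntil_support (tpath_isPath hT t s) hmem h1.ne'⟩

lemma nxt_eq_of_adj_step (hT : Tr.IsTree) [DecidableEq σ] {t x y : σ}
    (hxy : Tr.Adj x y) (hx : x ≠ t) (hy : y ≠ t) : nxt hT t x = nxt hT t y := by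
  obtain ⟨h1, q, hq⟩ := nxt_decomp hT (Ne.symm hx)
  by_cases hymem : y ∈ q.support
  · symm
    refine nxt_eq_of_cons_path hT h1 (q.takeUntil y hymem) ?_
    rw [Walk.cons_isPath_iff] at hq ⊢
    exact ⟨hq.1.takeUntil hymem,
      fun hmem => hq.2 (Walk.support_takeUntil_subset _ hymem hmem)⟩
  · symm
    refine nxt_eq_of_cons_path hT h1 (q.concat hxy) ?_
    rw [Walk.cons_isPath_iff] at hq ⊢
    refine ⟨isPath_concat hq.1 hxy hymem, ?_⟩
    rw [Walk.support_concat]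
    intro hmem
    rcases List.mem_append.1 hmem with hmem | hmem
    · exact hq.2 hmem
    · rw [List.mem_singleton] at hmem
      exact hy hmem.symm

lemma nxt_eq_of_walk (hT : Tr.IsTree) [DecidableEq σ] {t x y : σ}
    (q : Tr.Walk x y) (hq : t ∉ q.support) : nxt hT t x = nxt hT t y := by
  induction q with
  | nil => rfl
  | @cons a b c h q ih =>
    have hat : a ≠ t := fun e => hq (e ▸ Walk.start_mem_support _)
    have hbt : b ≠ t := fun e => hq (by
      rw [Walk.support_cons]
      exact List.mem_cons.2 (Or.inr (e ▸ q.start_mem_support)))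
    rw [nxt_eq_of_adj_step hT h hat hbt]
    exact ih (fun hmem => hq (by simp [hmem]))

/-- The side of the oriented tree edge `(t, t')`: vertices strictly beyond `t` towards `t'`. -/
noncomputable def tside (hT : Tr.IsTree) (t t' : σ) : Set σ :=
  {s | s ≠ t ∧ nxt hT t s = t'}

lemma mem_tside_self (hT : Tr.IsTree) {t t' : σ} (h : Tr.Adj t t') : t' ∈ tside hT t t' :=
  ⟨h.ne', nxt_of_adj hT h⟩

lemma not_mem_tside_left (hT : Tr.IsTree) (t t' : σ) : t ∉ tside hT t t' :=
  fun h => h.1 rfl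

lemma tside_or (hT : Tr.IsTree) [DecidableEq σ] {t t' : σ} (h : Tr.Adj t t') (s : σ) :
    s ∈ tside hT t t' ∨ s ∈ tside hT t' t := by
  by_cases hst : s = t
  · subst hst; exact Or.inr (mem_tside_self hT h.symm)
  by_cases hst' : s = t'
  · subst hst'; exact Or.inl (mem_tside_self hT h)
  by_cases hmem : t ∈ (tpath hT t' s).support
  · right
    refine ⟨hst', ?_⟩
    refine nxt_eq_of_cons_path hT h.symm ((tpath hT t' s).dropUntil t hmem) ?_
    rw [Walk.cons_isPath_iff]
    exact ⟨(tpath_isPath hT t' s).dropUntil hmem,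
      start_not_mem_dropUntil_support (tpath_isPath hT t' s) hmem h.ne⟩
  · left
    refine ⟨hst, ?_⟩
    have := nxt_eq_of_walk hT (tpath hT t' s) hmem
    rw [← this, nxt_of_adj hT h]

lemma tside_not_both (hT : Tr.IsTree) [DecidableEq σ] {t t' s : σ}
    (h1 : s ∈ tside hT t t') (h2 : s ∈ tside hT t' t) : False := by
  obtain ⟨hst, hn⟩ := h1
  obtain ⟨hst', hn'⟩ := h2
  obtain ⟨hadj, q, hq⟩ := nxt_decomp hT (Ne.symm hst)
  rw [Walk.cons_isPath_iff] at hq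
  have hq' : (q.copy hn rfl).IsPath := by simpa using hq.1
  have hqq : q.copy hn rfl = tpath hT t' s := tpath_unique hT _ hq'
  have hmem : nxt hT t' s ∈ (q.copy hn rfl).support := by
    rw [hqq]
    exact snd_mem_support _ (Walk.not_nil_of_ne (Ne.symm hst'))
  rw [Walk.support_copy, hn'] at hmem
  exact hq.2 hmem

lemma tside_nested (hT : Tr.IsTree) [DecidableEq σ] {t t' t'' : σ}
    (h : Tr.Adj t t') (h' : Tr.Adj t' t'') (htt : t'' ≠ t) :
    tside hT t' t'' ⊆ tside hT t t' := by
  intro s hs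
  have hst : s ≠ t := by
    rintro rfl
    exact htt (hs.2.symm.trans (nxt_of_adj hT h.symm))
  rcases tside_or hT h s with hmem | hmem
  · exact hmem
  · exact absurd (hmem.2.symm.trans hs.2).symm htt

end Tree

section Packing
variable {W : Type*} {G : SimpleGraph W}

lemma tside_crossing {σ : Type*} {Tr : SimpleGraph σ} (hT : Tr.IsTree) [DecidableEq σ]
    {t t' x y : σ} (h : Tr.Adj t t') (hxy : Tr.Adj x y)
    (hx : x ∈ tside hT t t') (hy : y ∈ tside hT t' t) : x = t' ∧ y = t := by
  by_cases hyt : y = t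
  · subst hyt
    have h2 := nxt_of_adj hT hxy.symm
    exact ⟨h2.symm.trans hx.2, rfl⟩
  · exfalso
    have h3 := nxt_eq_of_adj_step hT hxy hx.1 hyt
    exact tside_not_both hT ⟨hyt, h3.symm.trans hx.2⟩ hy

lemma exists_crossing_adj {W' : Type*} {Γ : SimpleGraph W'} {P : Set W'} {x y : W'}
    (p : Γ.Walk x y) : x ∈ P → y ∉ P →
    ∃ u v, Γ.Adj u v ∧ u ∈ p.support ∧ v ∈ p.support ∧ u ∈ P ∧ v ∉ P := by
  induction p with
  | nil => intro hx hy; exact absurd hx hy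
  | @cons a b c h q ih =>
    intro hx hy
    by_cases hb : b ∈ P
    · obtain ⟨u, v, h1, h2, h3, h4, h5⟩ := ih hb hy
      exact ⟨u, v, h1, by simp [h2], by simp [h3], h4, h5⟩
    · exact ⟨a, b, h, by simp, by simp [q.start_mem_support], hx, hb⟩

lemma packing_cover [Fintype W] {σ : Type*} [Fintype σ]
    {Tr : SimpleGraph σ} (hT : Tr.IsTree)
    (β : σ → Set W)
    (hedgecov : ∀ ⦃v w : W⦄, G.Adj v w → ∃ t, v ∈ β t ∧ w ∈ β t)
    (hbagconn : ∀ v : W, (Tr.induce {t | v ∈ β t}).Connected)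
    (MS : Set W → Prop)
    (hMSne : ∀ S, MS S → S.Nonempty)
    (hMSconn : ∀ S, MS S → ∀ x ∈ S, ∀ y ∈ S, WalkIn G S x y)
    (α : σ → Set W) (z d : ℕ)
    (hadh : ∀ t t', Tr.Adj t t' → (β t ∩ β t').ncard ≤ z)
    (hsized : ∀ t, (α t).ncard ≤ d)
    (hhit : ∀ t S, MS S → (S ∩ β t).Nonempty → (S ∩ α t).Nonempty)
    (k : ℕ) (E : Set W) :
    (∃ f : Fin (k+1) → Set W, (∀ a, MS (f a) ∧ f a ∩ E = ∅) ∧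
      ∀ a b, a ≠ b → Disjoint (f a) (f b)) ∨
    (∃ A : Set W, A.ncard ≤ k * (z+d) ∧ ∀ S, MS S → S ∩ E = ∅ → (S ∩ A).Nonempty) := by
  classical
  induction k generalizing E with
  | zero =>
    by_cases hex : ∃ S, MS S ∧ S ∩ E = ∅
    · obtain ⟨S, hS, hSE⟩ := hex
      exact Or.inl ⟨fun _ => S, fun _ => ⟨hS, hSE⟩,
        fun a b hab => absurd (Fin.fin_one_eq_zero a ▸ Fin.fin_one_eq_zero b ▸ rfl) hab⟩
    · push_neg at hex
      exact Or.inr ⟨∅, by simp, fun S hS hSE =>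
        absurd hSE (Set.nonempty_iff_ne_empty.1 (hex S hS))⟩
  | succ k IH =>
    by_cases hex : ∃ S, MS S ∧ S ∩ E = ∅
    swap
    · push_neg at hex
      exact Or.inr ⟨∅, by simp, fun S hS hSE =>
        absurd hSE (Set.nonempty_iff_ne_empty.1 (hex S hS))⟩
    obtain ⟨t₀⟩ := hT.isConnected.nonempty
    have hTv_ne : ∀ v : W, {t | v ∈ β t}.Nonempty := by
      intro v
      obtain ⟨⟨t, ht⟩⟩ := (hbagconn v).nonempty
      exact ⟨t, ht⟩
    set Vs : σ → σ → Set W := fun t t' => {v | ∃ s, s ∈ tside hT t t' ∧ v ∈ β s} with hVs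
    have hsep1 : ∀ t t', Tr.Adj t t' → ∀ v w, G.Adj v w → v ∈ Vs t t' →
        v ∉ β t ∩ β t' → w ∈ Vs t t' := by
      intro t t' htt v w hvw hv hvσ
      obtain ⟨s₁, hs₁side, hs₁bag⟩ := hv
      obtain ⟨s, hsv, hsw⟩ := hedgecov hvw
      by_cases hs : s ∈ tside hT t t'
      · exact ⟨s, hs, hsw⟩
      · exfalso
        have hs' : s ∈ tside hT t' t := (tside_or hT htt s).resolve_left hs
        obtain ⟨p, hp⟩ := walkIn_of_connected_induce (hbagconn v) hs₁bag hsv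
        obtain ⟨u1, u2, hu12, hm1, hm2, hP1, hP2⟩ :=
          exists_crossing_adj (P := tside hT t t') p hs₁side
            (fun hmem => tside_not_both hT hmem hs')
        have hu2' : u2 ∈ tside hT t' t := (tside_or hT htt u2).resolve_left hP2
        obtain ⟨hu1, hu2⟩ := tside_crossing hT htt hu12 hP1 hu2'
        exact hvσ ⟨hu2 ▸ hp u2 hm2, hu1 ▸ hp u1 hm1⟩
    have hsep2 : ∀ t t', Tr.Adj t t' → ∀ S, MS S → (S ∩ (β t ∩ β t')) = ∅ →
        (S ∩ Vs t t').Nonempty → S ⊆ Vs t t' := by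
      rintro t t' htt S hS hSσ ⟨x, hxS, hxV⟩ y hyS
      by_contra hyV
      obtain ⟨p, hp⟩ := hMSconn S hS x hxS y hyS
      obtain ⟨u1, u2, hu12, hm1, hm2, hP1, hP2⟩ :=
        exists_crossing_adj (P := Vs t t') p hxV hyV
      exact hP2 (hsep1 t t' htt u1 u2 hu12 hP1
        (fun hmem => (Set.eq_empty_iff_forall_notMem.1 hSσ u1) ⟨hp u1 hm1, hmem⟩))
    have hloc : ∀ (t' : σ) (v : W), v ∉ β t' → ∀ s₀ ∈ {t | v ∈ β t},
        ∀ s ∈ {t | v ∈ β t}, s ≠ t' ∧ nxt hT t' s = nxt hT t' s₀ := by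
      intro t' v hv s₀ hs₀ s hs
      have hst' : s ≠ t' := fun e => hv (e ▸ hs)
      obtain ⟨p, hp⟩ := walkIn_of_connected_induce (hbagconn v) hs hs₀
      exact ⟨hst', nxt_eq_of_walk hT p (fun hmem => hv (hp t' hmem))⟩
    -- candidate separations
    set Vo : Option {p : σ × σ // Tr.Adj p.1 p.2} → Set W :=
      (fun o => o.elim Set.univ (fun e => Vs e.1.1 e.1.2)) with hVo
    set σo : Option {p : σ × σ // Tr.Adj p.1 p.2} → Set W :=
      (fun o => o.elim ∅ (fun e => β e.1.1 ∩ β e.1.2)) with hσo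
    set heado : Option {p : σ × σ // Tr.Adj p.1 p.2} → σ :=
      (fun o => o.elim t₀ (fun e => e.1.2)) with hheado
    set sideo : Option {p : σ × σ // Tr.Adj p.1 p.2} → Set σ :=
      (fun o => o.elim Set.univ (fun e => tside hT e.1.1 e.1.2)) with hsideo
    set 𝒞 : Set (Option {p : σ × σ // Tr.Adj p.1 p.2}) :=
      {o | ∃ S, MS S ∧ S ∩ E = ∅ ∧ S ⊆ Vo o \ σo o} with h𝒞
    have h𝒞ne : 𝒞.Nonempty := by
      obtain ⟨S, hS, hSE⟩ := hex
      refine ⟨none, S, hS, hSE, ?_⟩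
      simp [hVo, hσo]
    obtain ⟨o, ho𝒞, homin⟩ :=
      Set.exists_min_image 𝒞 (fun o => (sideo o).ncard) (Set.toFinite _) h𝒞ne
    have hclaim : ∀ S, MS S → S ∩ E = ∅ → S ⊆ Vo o \ σo o →
        (S ∩ β (heado o)).Nonempty := by
      intro S hS hSE hSsub
      rw [Set.nonempty_iff_ne_empty]
      intro hSβ
      have hSβ' : ∀ v ∈ S, v ∉ β (heado o) := fun v hv hvβ =>
        (Set.eq_empty_iff_forall_notMem.1 hSβ v) ⟨hv, hvβ⟩
      obtain ⟨v₀, hv₀⟩ := hMSne S hS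
      obtain ⟨s₀, hs₀⟩ := hTv_ne v₀
      have hts₀ : heado o ≠ s₀ := fun e => hSβ' v₀ hv₀ (e ▸ hs₀)
      have ht'₂ : Tr.Adj (heado o) (nxt hT (heado o) s₀) := nxt_adj hT hts₀
      have hkey : ∀ v ∈ S, ∀ s ∈ {t | v ∈ β t},
          s ∈ tside hT (heado o) (nxt hT (heado o) s₀) := by
        have hstep : ∀ x y, G.Adj x y → x ∈ S → y ∈ S →
            (∀ s ∈ {t | x ∈ β t}, s ∈ tside hT (heado o) (nxt hT (heado o) s₀)) →
            (∀ s ∈ {t | y ∈ β t}, s ∈ tside hT (heado o) (nxt hT (heado o) s₀)) := by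
          intro x y hxy hxS hyS hx s hs
          obtain ⟨sc, hsx, hsy⟩ := hedgecov hxy
          have h1 := hloc (heado o) y (hSβ' y hyS) sc hsy s hs
          have h2 := hx sc hsx
          exact ⟨h1.1, h1.2.trans h2.2⟩
        have hbase : ∀ s ∈ {t | v₀ ∈ β t},
            s ∈ tside hT (heado o) (nxt hT (heado o) s₀) := by
          intro s hs
          exact hloc (heado o) v₀ (hSβ' v₀ hv₀) s₀ hs₀ s hs
        have hwalkprop : ∀ (x y : W) (p : G.Walk x y), (∀ u ∈ p.support, u ∈ S) →
            (∀ s ∈ {t | x ∈ β t}, s ∈ tside hT (heado o) (nxt hT (heado o) s₀)) →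
            (∀ s ∈ {t | y ∈ β t}, s ∈ tside hT (heado o) (nxt hT (heado o) s₀)) := by
          intro x y p
          induction p with
          | nil => exact fun _ h => h
          | @cons a b c h q ih =>
            intro hsup hx
            exact ih (fun u hu => hsup u (by simp [hu]))
              (hstep a b h (hsup a (by simp)) (hsup b (by simp [q.start_mem_support])) hx)
        intro v hv
        obtain ⟨p, hp⟩ := hMSconn S hS v₀ hv₀ v hv
        exact hwalkprop v₀ v p (fun u hu => hp u hu) hbase
      have hSsub' : S ⊆ Vs (heado o) (nxt hT (heado o) s₀) \
          (β (heado o) ∩ β (nxt hT (heado o) s₀)) := by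
        intro v hv
        obtain ⟨s, hs⟩ := hTv_ne v
        exact ⟨⟨s, hkey v hv s hs, hs⟩, fun hmem => hSβ' v hv hmem.1⟩
      have ho'𝒞 : (some ⟨((heado o), (nxt hT (heado o) s₀)), ht'₂⟩) ∈ 𝒞 :=
        ⟨S, hS, hSE, hSsub'⟩
      have hside_sub : sideo (some ⟨((heado o), (nxt hT (heado o) s₀)), ht'₂⟩) ⊆ sideo o := by
        cases o with
        | none => exact fun s _ => Set.mem_univ s
        | some e =>
          have hne2 : nxt hT (heado (some e)) s₀ ≠ e.1.1 := by
            intro hne2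
            obtain ⟨v₀', hv₀'⟩ := hMSne S hS
            have hv₀V : v₀ ∈ Vs e.1.1 e.1.2 := (hSsub hv₀).1
            obtain ⟨s₁, hs₁side, hs₁bag⟩ := hv₀V
            have := hkey v₀ hv₀ s₁ hs₁bag
            rw [hne2] at this
            exact tside_not_both hT hs₁side this
          exact tside_nested hT e.2 ht'₂ hne2
      have hside_mem : heado o ∈ sideo o := by
        cases o with
        | none => exact Set.mem_univ _
        | some e => exact mem_tside_self hT e.2
      have hside_not : heado o ∉ sideo (some ⟨((heado o), (nxt hT (heado o) s₀)), ht'₂⟩) :=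
        not_mem_tside_left hT _ _
      have hlt : (sideo (some ⟨((heado o), (nxt hT (heado o) s₀)), ht'₂⟩)).ncard <
          (sideo o).ncard :=
        Set.ncard_lt_ncard ⟨hside_sub, fun hsub => hside_not (hsub hside_mem)⟩
          (Set.toFinite _)
      exact absurd (homin _ ho'𝒞) (not_le.2 hlt)
    -- the blocker
    have hσocard : (σo o).ncard ≤ z := by
      cases o with
      | none => simp [hσo]
      | some e => exact hadh e.1.1 e.1.2 e.2
    have hBcard : (σo o ∪ α (heado o)).ncard ≤ z + d :=
      le_trans (Set.ncard_union_le _ _) (Nat.add_le_add hσocard (hsized _))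
    have hB : ∀ S, MS S → S ∩ E = ∅ → S ∩ (σo o ∪ α (heado o)) = ∅ → S ∩ Vo o = ∅ := by
      intro S hS hSE hSB
      by_contra hneq
      have hSV : (S ∩ Vo o).Nonempty := Set.nonempty_iff_ne_empty.2 hneq
      have hSσ : S ∩ σo o = ∅ := by
        rw [Set.eq_empty_iff_forall_notMem]
        rintro x ⟨hx1, hx2⟩
        exact (Set.eq_empty_iff_forall_notMem.1 hSB x) ⟨hx1, Or.inl hx2⟩
      have hSsub : S ⊆ Vo o := by
        cases o with
        | none => exact fun x _ => Set.mem_univ x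
        | some e => exact hsep2 e.1.1 e.1.2 e.2 S hS hSσ hSV
      have hSsub' : S ⊆ Vo o \ σo o := fun x hx =>
        ⟨hSsub hx, fun hmem => (Set.eq_empty_iff_forall_notMem.1 hSσ x) ⟨hx, hmem⟩⟩
      obtain ⟨x, hx1, hx2⟩ := hhit (heado o) S hS (hclaim S hS hSE hSsub')
      exact (Set.eq_empty_iff_forall_notMem.1 hSB x) ⟨hx1, Or.inr hx2⟩
    obtain ⟨S₁, hS₁, hS₁E, hS₁sub⟩ := ho𝒞
    rcases IH (E ∪ Vo o) with ⟨f, hf, hfd⟩ | ⟨A', hA', hhA'⟩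
    · left
      have hdisj₁ : ∀ i, Disjoint S₁ (f i) := by
        intro i
        rw [Set.disjoint_left]
        intro x hxS₁ hxf
        exact (Set.eq_empty_iff_forall_notMem.1 (hf i).2 x)
          ⟨hxf, Or.inr (hS₁sub hxS₁).1⟩
      refine ⟨Fin.cons S₁ f, ?_, ?_⟩
      · intro a
        rcases Fin.eq_zero_or_eq_succ a with rfl | ⟨i, rfl⟩
        · exact ⟨hS₁, hS₁E⟩
        · rw [Fin.cons_succ]
          refine ⟨(hf i).1, ?_⟩
          rw [Set.eq_empty_iff_forall_notMem]
          rintro x ⟨hx1, hx2⟩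
          exact (Set.eq_empty_iff_forall_notMem.1 (hf i).2 x) ⟨hx1, Or.inl hx2⟩
      · intro a b hab
        rcases Fin.eq_zero_or_eq_succ a with rfl | ⟨i, rfl⟩ <;>
          rcases Fin.eq_zero_or_eq_succ b with rfl | ⟨j, rfl⟩
        · exact absurd rfl hab
        · rw [Fin.cons_zero, Fin.cons_succ]
          exact hdisj₁ j
        · rw [Fin.cons_zero, Fin.cons_succ]
          exact (hdisj₁ i).symm
        · rw [Fin.cons_succ, Fin.cons_succ]
          exact hfd i j (fun e => hab (by rw [e]))
    · right
      refine ⟨A' ∪ (σo o ∪ α (heado o)), ?_, ?_⟩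
      · refine le_trans (Set.ncard_union_le _ _) ?_
        rw [Nat.succ_mul]
        exact Nat.add_le_add hA' hBcard
      · intro S hS hSE
        by_cases hSB : S ∩ (σo o ∪ α (heado o)) = ∅
        · have hSV := hB S hS hSE hSB
          have hSE' : S ∩ (E ∪ Vo o) = ∅ := by
            rw [Set.inter_union_distrib_left, hSE, hSV, Set.union_empty]
          obtain ⟨x, hx1, hx2⟩ := hhA' S hS hSE'
          exact ⟨x, hx1, Or.inl hx2⟩
        · obtain ⟨x, hx⟩ := Set.nonempty_iff_ne_empty.2 hSB
          exact ⟨x, hx.1, Or.inr hx.2⟩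

end Packing

section Finitize
variable {W τ : Type*} [Fintype W] {G : SimpleGraph W}

lemma exists_finite_subtree [Nonempty W] (D : TreeDecomp G τ) :
    ∃ T₀ : Set τ, T₀.Finite ∧ (D.tree.induce T₀).IsTree ∧
      (∀ ⦃v w : W⦄, G.Adj v w → ∃ s : ↥T₀, v ∈ D.bag ↑s ∧ w ∈ D.bag ↑s) ∧
      (∀ v : W, ((D.tree.induce T₀).induce {s : ↥T₀ | v ∈ D.bag ↑s}).Connected) := by
  classical
  have hT := D.isTree
  choose tv htv using D.bag_vert
  set es : W → W → Set τ :=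
    (fun v w => if h : G.Adj v w then {(D.bag_edge h).choose} else ∅) with hes
  set F : Set τ := Set.range tv ∪ ⋃ (v : W) (w : W), es v w with hF
  have hFfin : F.Finite := by
    refine (Set.finite_range tv).union ?_
    refine Set.finite_iUnion (fun v => Set.finite_iUnion (fun w => ?_))
    by_cases h : G.Adj v w <;> simp [hes, h]
  set T₀ : Set τ := ⋃ (x ∈ F) (y ∈ F), {s | s ∈ (tpath hT x y).support} with hT₀
  have hT₀fin : T₀.Finite :=
    hFfin.biUnion (fun x _ => hFfin.biUnion (fun y _ => (tpath hT x y).support.finite_toSet))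
  have hFT₀ : F ⊆ T₀ := by
    intro x hx
    exact Set.mem_biUnion hx (Set.mem_biUnion hx (Walk.start_mem_support _))
  have hFne : F.Nonempty := ⟨tv (Classical.arbitrary W), Or.inl ⟨_, rfl⟩⟩
  have hanchor : ∀ x ∈ T₀, ∃ a ∈ F, WalkIn D.tree T₀ x a := by
    intro x hx
    simp only [hT₀, Set.mem_iUnion] at hx
    obtain ⟨a, ha, b, hb, hxs⟩ := hx
    refine ⟨a, ha, WalkIn.symm ⟨(tpath hT a b).takeUntil x hxs, ?_⟩⟩
    intro u hu
    have hu' := Walk.support_takeUntil_subset _ hxs hu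
    exact Set.mem_biUnion ha (Set.mem_biUnion hb hu')
  have hFF : ∀ a ∈ F, ∀ b ∈ F, WalkIn D.tree T₀ a b := by
    intro a ha b hb
    exact ⟨tpath hT a b, fun u hu => Set.mem_biUnion ha (Set.mem_biUnion hb hu)⟩
  have hT₀walk : ∀ x ∈ T₀, ∀ y ∈ T₀, WalkIn D.tree T₀ x y := by
    intro x hx y hy
    obtain ⟨a, ha, hwa⟩ := hanchor x hx
    obtain ⟨b, hb, hwb⟩ := hanchor y hy
    exact (hwa.trans (hFF a ha b hb)).trans hwb.symm
  have hT₀ne : T₀.Nonempty := by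
    obtain ⟨a, ha⟩ := hFne
    exact ⟨a, hFT₀ ha⟩
  have hconn₀ : (D.tree.induce T₀).Connected := connected_induce_of_walkIn hT₀ne hT₀walk
  have hacyc : (D.tree.induce T₀).IsAcyclic := by
    intro v c hc
    exact hT.IsAcyclic (c.map (induceVal D.tree T₀)) (hc.map Subtype.val_injective)
  have hgeo : ∀ x y, x ∈ T₀ → y ∈ T₀ → ∀ s ∈ (tpath hT x y).support, s ∈ T₀ := by
    intro x y hx hy s hs
    obtain ⟨q, hq⟩ := hT₀walk x hx y hy
    have heq : (q.toPath : D.tree.Walk x y) = tpath hT x y := tpath_unique hT _ q.toPath.2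
    rw [← heq] at hs
    exact hq s (Walk.support_toPath_subset q hs)
  refine ⟨T₀, hT₀fin, ⟨hconn₀, hacyc⟩, ?_, ?_⟩
  · intro v w hvw
    have hes' : (D.bag_edge hvw).choose ∈ F := Or.inr (by
      refine Set.mem_iUnion.2 ⟨v, Set.mem_iUnion.2 ⟨w, ?_⟩⟩
      simp [hes, hvw])
    exact ⟨⟨_, hFT₀ hes'⟩, (D.bag_edge hvw).choose_spec.1, (D.bag_edge hvw).choose_spec.2⟩
  · intro v
    apply connected_induce_of_walkIn
    · exact ⟨⟨tv v, hFT₀ (Or.inl ⟨v, rfl⟩)⟩, htv v⟩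
    · rintro ⟨x, hxT⟩ hx ⟨y, hyT⟩ hy
      have hTv : ∀ s ∈ (tpath hT x y).support, v ∈ D.bag s := by
        obtain ⟨q, hq⟩ := walkIn_of_connected_induce (D.bag_conn v) hx hy
        have heq : (q.toPath : D.tree.Walk x y) = tpath hT x y := tpath_unique hT _ q.toPath.2
        intro s hs
        rw [← heq] at hs
        exact hq s (Walk.support_toPath_subset q hs)
      have hw := walkIn_induce (G := D.tree) (S := T₀)
        (U := {t | v ∈ D.bag t} ∩ T₀) Set.inter_subset_right (tpath hT x y)
        (fun s hs => ⟨hTv s hs, hgeo x y hxT hyT s hs⟩) hxT hyT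
      exact hw.mono (fun s hsmem => hsmem.1)

end Finitize

section Induced
variable {V W : Type*} {H : SimpleGraph V} {G : SimpleGraph W}

def inducedSub (G : SimpleGraph W) (S : Set W) : G.Subgraph where
  verts := S
  Adj := fun v w => v ∈ S ∧ w ∈ S ∧ G.Adj v w
  adj_sub := fun h => h.2.2
  edge_vert := fun h => h.1
  symm := ⟨fun v w h => ⟨h.2.1, h.1, h.2.2.symm⟩⟩

lemma isMinorOf_coe_inducedSub {S : Set W} (h : MinorVia H G S) :
    IsMinorOf H (inducedSub G S).coe :=
  (minorVia_iff.1 h).of_injective_hom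
    (⟨fun x => x, fun {x y} h' => ⟨x.2, y.2, h'⟩⟩ : G.induce S →g (inducedSub G S).coe)
    (fun _ _ e => e)

end Induced

/-- Lemma 5.6, for antichains of connected graphs. Let `Z` be a finite
nonempty antichain of connected graphs under the minor relation, `k ≥ 1`, `z, d ∈ ℕ`, let `G`
have a tree decomposition `(T, β)` of adhesion at most `z`, and let `α` assign to every node `t`
a set `α(t) ⊆ β(t)` with `|α(t)| ≤ d` such that `(β(t), α(t))` is a `Z`-local cover of `G`.
Then either `G` contains `k` pairwise vertex-disjoint subgraphs each containing some member of
`Z` as a minor, or there is a `Z`-local cover `(X, A)` of `G` with `G − X` containing no member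
of `Z` as a minor, `|A| ≤ (k−1)(z+d)`, and `|N_G(V(C))| ≤ z` for every connected component `C`
of `G − X`. -/
theorem stmt_12 {ι : Type*} [Fintype ι] [Nonempty ι] {Vf : ι → Type*}
    [∀ i, Fintype (Vf i)] (Z : ∀ i, SimpleGraph (Vf i))
    (hconn : ∀ i, (Z i).Connected)
    (hanti : ∀ i j, i ≠ j → ¬ IsMinorOf (Z i) (Z j))
    {W : Type*} {τ : Type*} [Fintype W] (G : SimpleGraph W)
    (k : ℕ) (hk : 1 ≤ k) (z d : ℕ)
    (D : TreeDecomp G τ)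
    (hadh : ∀ t t' : τ, D.tree.Adj t t' → (D.bag t ∩ D.bag t').ncard ≤ z)
    (α : τ → Set W)
    (hα : ∀ t : τ, (α t).ncard ≤ d ∧ IsLocalCoverFam Z G (D.bag t) (α t)) :
    (∃ M : Fin k → G.Subgraph,
      (∀ a b, a ≠ b → Disjoint (M a).verts (M b).verts) ∧
      ∀ a, ∃ i, IsMinorOf (Z i) ((M a).coe)) ∨
    (∃ X A : Set W, IsLocalCoverFam Z G X A ∧
      (∀ i, ¬ IsMinorOf (Z i) (G.induce Xᶜ)) ∧
      A.ncard ≤ (k - 1) * (z + d) ∧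
      ∀ C : (G.induce Xᶜ).ConnectedComponent,
        ({w : W | w ∉ Subtype.val '' C.supp ∧
            ∃ v ∈ Subtype.val '' C.supp, G.Adj v w}).ncard ≤ z) := by
  classical
  set MS : Set W → Prop :=
    (fun S => ∃ i, MinorVia (Z i) G S ∧ ∀ x ∈ S, ∀ y ∈ S, WalkIn G S x y) with hMS
  have hMSne : ∀ S, MS S → S.Nonempty := by
    rintro S ⟨i, hmv, -⟩
    have := (hconn i).nonempty
    exact hmv.nonempty
  have hright : ∀ A : Set W, (∀ S, MS S → (S ∩ A).Nonempty) → A.ncard ≤ (k-1)*(z+d) →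
      (∃ X A' : Set W, IsLocalCoverFam Z G X A' ∧ (∀ i, ¬ IsMinorOf (Z i) (G.induce Xᶜ)) ∧
        A'.ncard ≤ (k - 1) * (z + d) ∧
        ∀ C : (G.induce Xᶜ).ConnectedComponent,
          ({w : W | w ∉ Subtype.val '' C.supp ∧
            ∃ v ∈ Subtype.val '' C.supp, G.Adj v w}).ncard ≤ z) := by
    intro A hhitall hcard
    refine ⟨Set.univ, A, ⟨Set.subset_univ A, ?_⟩, ?_, hcard, ?_⟩
    · intro i M hcopy hmeet
      obtain ⟨T, hexp, -⟩ := hcopy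
      have hmv : MinorVia (Z i) G M.verts := minorVia_of_isExpansion hexp
      obtain ⟨S₀, hS₀sub, hS₀ne, hS₀walk, hS₀mv⟩ := hmv.exists_connected (hconn i)
      obtain ⟨x, hx1, hx2⟩ := hhitall S₀ ⟨i, hS₀mv, hS₀walk⟩
      exact ⟨x, hS₀sub hx1, hx2⟩
    · intro i hmin
      obtain ⟨Xb, hne', -⟩ := hmin
      have := (hconn i).nonempty
      obtain ⟨x, hx⟩ := hne' (Classical.arbitrary (Vf i))
      have hx2 := x.2
      simp at hx2
    · intro C
      refine SimpleGraph.ConnectedComponent.ind ?_ C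
      rintro ⟨v, hv⟩
      simp at hv
  cases isEmpty_or_nonempty W with
  | inl hW =>
    right
    refine hright ∅ ?_ (by simp)
    intro S hS
    obtain ⟨x, -⟩ := hMSne S hS
    exact hW.elim x
  | inr hW =>
    obtain ⟨T₀, hT₀fin, hT₀tree, hT₀edge, hT₀conn⟩ := exists_finite_subtree D
    letI : Fintype ↥T₀ := hT₀fin.fintype
    obtain ⟨k', rfl⟩ : ∃ k', k = k' + 1 := ⟨k - 1, (Nat.succ_pred_eq_of_pos hk).symm⟩
    have hpc := packing_cover (G := G) hT₀tree (fun s => D.bag ↑s) hT₀edge hT₀conn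
      MS hMSne ?hconn2 (fun s => α ↑s) z d ?hadh2 (fun s => (hα ↑s).1) ?hhit2 k' ∅
    case hconn2 => rintro S ⟨i, -, hw⟩; exact hw
    case hadh2 => intro t t' hadj; exact hadh ↑t ↑t' hadj
    case hhit2 =>
      intro t S hS hmeet
      obtain ⟨i, hmv, -⟩ := hS
      obtain ⟨M, hcopy, hverts⟩ := exists_inflatedCopy hmv
      have hres := (hα ↑t).2.2 i M hcopy (by rw [hverts]; exact hmeet)
      rwa [hverts] at hres
    rcases hpc with ⟨f, hf, hfd⟩ | ⟨A, hA, hhitA⟩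
    · left
      refine ⟨fun a => inducedSub G (f a), fun a b hab => hfd a b hab, ?_⟩
      intro a
      obtain ⟨i, hmv, -⟩ := (hf a).1
      exact ⟨i, isMinorOf_coe_inducedSub hmv⟩
    · right
      refine hright A ?_ (by simpa using hA)
      intro S hS
      exact hhitA S hS (Set.inter_empty S)
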